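/- Let X be a topological space with a cover 𝒴 such that |𝒴| ≤ 𝔠, every Y ∈ 𝒴 is countably tight, and X = ⋃{cl(A) : A ⊆ Y, |A| ≤ 𝔠} for every Y ∈ 𝒴. Assume moreover that for every set D ⊆ X with |D| ≤ 𝔠, the closure cl(D) is Lindelöf and has pseudocharacter ψ(cl(D), X) ≤ 𝔠. Then X has a dense subset of cardinality at most 𝔠, i.e., d(X) ≤ 𝔠. -/

import Mathlib

open Set Cardinal

/-- A topological space `Z` is countably tight if whenever a point lies in the closure
of a set `A`, it lies in the closure of a countable subset of `A`. -/
def CountablyTight (Z : Type*) [TopologicalSpace Z] : Prop :=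
  ∀ (A : Set Z) (z : Z), z ∈ closure A → ∃ B ⊆ A, B.Countable ∧ z ∈ closure B

/-- The pseudocharacter of the subset `Z` in `X` is at most `κ`: `Z` is the
intersection of at most `κ` many open subsets of `X`. -/
def PseudoCharLE {X : Type*} [TopologicalSpace X] (Z : Set X) (κ : Cardinal) : Prop :=
  ∃ 𝒰 : Set (Set X), (∀ U ∈ 𝒰, IsOpen U) ∧ #𝒰 ≤ κ ∧ ⋂₀ 𝒰 = Z

universe u

namespace Stmt7Aux

/-- Index type: a well-order of order type `ω₁`. -/
abbrev Idx : Type u := (Cardinal.aleph.{u} 1).ord.ToType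

theorem exists_idx_bound {T : Set (Idx.{u})} (hT : T.Countable) :
    ∃ i : Idx.{u}, ∀ t ∈ T, t < i := by
  haveI : IsWellOrder (Idx.{u}) (· < ·) := isWellOrder_lt
  by_contra h
  push_neg at h
  have hu : Set.Unbounded (· < ·) T := by
    intro i
    obtain ⟨t, ht, hti⟩ := h i
    exact ⟨t, ht, not_lt.2 hti⟩
  have hc := Order.cof_le (α := Idx.{u}) (s := T) h
  rw [Ordinal.cof_toType] at hc
  rw [Cardinal.isRegular_aleph_one.cof_eq] at hc
  exact absurd (hc.trans hT.le_aleph0) (Cardinal.aleph0_lt_aleph_one).not_ge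

theorem mk_idx_le : #(Idx.{u}) ≤ continuum.{u} := by
  rw [Cardinal.mk_toType, Cardinal.card_ord]
  exact aleph_one_le_continuum

variable {X : Type u}

theorem cmul {a b : Cardinal.{u}} (ha : a ≤ continuum) (hb : b ≤ continuum) :
    a * b ≤ continuum :=
  (mul_le_mul' ha hb).trans_eq (mul_eq_self aleph0_le_continuum)

theorem cadd {a b : Cardinal.{u}} (ha : a ≤ continuum) (hb : b ≤ continuum) :
    a + b ≤ continuum :=
  (add_le_add ha hb).trans_eq (add_eq_self aleph0_le_continuum)

/-- The number of countable subsets of a set of size at most `𝔠` is at most `𝔠`. -/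
theorem mk_countable_subsets_le {α : Type u} {S : Set α} (hS : #S ≤ continuum) :
    #{C : Set α // C ⊆ S ∧ C.Countable} ≤ continuum := by
  have h1 : #{C : Set α // C ⊆ S ∧ C.Countable} ≤ #{C : Set α // C ⊆ S ∧ #C ≤ ℵ₀} := by
    refine ⟨⟨fun C => ⟨C.1, C.2.1, C.2.2.le_aleph0⟩, ?_⟩⟩
    intro C₁ C₂ h
    have h2 := congrArg Subtype.val h
    exact Subtype.ext h2
  refine h1.trans ((mk_bounded_subset_le S ℵ₀).trans ?_)
  calc max #↥S ℵ₀ ^ ℵ₀ ≤ continuum ^ ℵ₀ := by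
        refine power_le_power_right (max_le hS aleph0_le_continuum)
    _ = continuum := continuum_power_aleph0

/-- The pool of open sets: all members of the chosen pseudocharacter families of
closures of countable subsets of `S`. -/
def pool (𝒰f : Set X → Set (Set X)) (S : Set X) : Set (Set X) :=
  ⋃ C : {C : Set X // C ⊆ S ∧ C.Countable}, 𝒰f C.1

theorem mem_pool {𝒰f : Set X → Set (Set X)} {S C : Set X} (hCS : C ⊆ S) (hCc : C.Countable)
    {U : Set X} (hU : U ∈ 𝒰f C) : U ∈ pool 𝒰f S :=
  mem_iUnion.2 ⟨⟨C, hCS, hCc⟩, hU⟩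

theorem mk_pool_le {𝒰f : Set X → Set (Set X)} (h𝒰 : ∀ C, #(𝒰f C) ≤ continuum)
    {S : Set X} (hS : #S ≤ continuum) : #(pool 𝒰f S) ≤ continuum := by
  refine (mk_iUnion_le _).trans (cmul (mk_countable_subsets_le hS) (ciSup_le' fun C => h𝒰 C.1))

/-- One step of the closing-off construction. -/
def gNext (𝒴 : Set (Set X)) (comp : X → Set X → Set X) (𝒰f : Set X → Set (Set X))
    (w : Set (Set X) → X) (S : Set X) : Set X :=
  S ∪ (⋃ a : S, ⋃ Y : 𝒴, comp a.1 Y.1) ∪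
    (w '' {V : Set (Set X) | V.Countable ∧ V ⊆ pool 𝒰f S ∧ ⋃₀ V ≠ Set.univ})

variable {𝒴 : Set (Set X)} {comp : X → Set X → Set X} {𝒰f : Set X → Set (Set X)}
  {w : Set (Set X) → X}

theorem subset_gNext (S : Set X) : S ⊆ gNext 𝒴 comp 𝒰f w S :=
  subset_union_left.trans' (by exact subset_union_left)

theorem comp_subset_gNext {S : Set X} {a : X} (ha : a ∈ S) {Y : Set X} (hY : Y ∈ 𝒴) :
    comp a Y ⊆ gNext 𝒴 comp 𝒰f w S := by
  intro x hx
  exact Or.inl (Or.inr (mem_iUnion.2 ⟨⟨a, ha⟩, mem_iUnion.2 ⟨⟨Y, hY⟩, hx⟩⟩))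

theorem w_mem_gNext {S : Set X} {V : Set (Set X)} (h1 : V.Countable) (h2 : V ⊆ pool 𝒰f S)
    (h3 : ⋃₀ V ≠ Set.univ) : w V ∈ gNext 𝒴 comp 𝒰f w S :=
  Or.inr (mem_image_of_mem w ⟨h1, h2, h3⟩)

theorem mk_gNext_le (h𝒴 : #𝒴 ≤ continuum) (hcomp : ∀ x Y, #(comp x Y) ≤ continuum)
    (h𝒰 : ∀ C, #(𝒰f C) ≤ continuum) {S : Set X} (hS : #S ≤ continuum) :
    #(gNext 𝒴 comp 𝒰f w S) ≤ continuum := by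
  refine (mk_union_le _ _).trans (cadd ((mk_union_le _ _).trans (cadd hS ?_)) ?_)
  · refine (mk_iUnion_le _).trans (cmul hS (ciSup_le' fun a => ?_))
    exact (mk_iUnion_le _).trans (cmul h𝒴 (ciSup_le' fun Y => hcomp a.1 Y.1))
  · refine mk_image_le.trans ?_
    have hsub : {V : Set (Set X) | V.Countable ∧ V ⊆ pool 𝒰f S ∧ ⋃₀ V ≠ Set.univ} ⊆
        {V : Set (Set X) | V ⊆ pool 𝒰f S ∧ V.Countable} := fun V hV => ⟨hV.2.1, hV.1⟩
    exact (mk_le_mk_of_subset hsub).trans (mk_countable_subsets_le (mk_pool_le h𝒰 hS))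

/-- The transfinite iteration of the closing-off step along `ω₁`. -/
noncomputable def EIter (𝒴 : Set (Set X)) (comp : X → Set X → Set X)
    (𝒰f : Set X → Set (Set X)) (w : Set (Set X) → X) : Idx.{u} → Set X :=
  (IsWellFounded.wf (r := ((· < ·) : Idx.{u} → Idx.{u} → Prop))).fix
    (fun i ih => ⋃ j : {j : Idx.{u} // j < i}, gNext 𝒴 comp 𝒰f w (ih j.1 j.2))

theorem EIter_eq (i : Idx.{u}) :
    EIter 𝒴 comp 𝒰f w i = ⋃ j : {j : Idx.{u} // j < i}, gNext 𝒴 comp 𝒰f w (EIter 𝒴 comp 𝒰f w j.1) := by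
  rw [EIter, WellFounded.fix_eq]

theorem gNext_subset_EIter {j i : Idx.{u}} (h : j < i) :
    gNext 𝒴 comp 𝒰f w (EIter 𝒴 comp 𝒰f w j) ⊆ EIter 𝒴 comp 𝒰f w i := by
  intro x hx
  rw [EIter_eq]
  exact mem_iUnion.2 ⟨⟨j, h⟩, hx⟩

theorem EIter_mono {j i : Idx.{u}} (h : j < i) :
    EIter 𝒴 comp 𝒰f w j ⊆ EIter 𝒴 comp 𝒰f w i :=
  (subset_gNext _).trans (gNext_subset_EIter h)

theorem mk_EIter_le (h𝒴 : #𝒴 ≤ continuum) (hcomp : ∀ x Y, #(comp x Y) ≤ continuum)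
    (h𝒰 : ∀ C, #(𝒰f C) ≤ continuum) (i : Idx.{u}) :
    #(EIter 𝒴 comp 𝒰f w i) ≤ continuum := by
  induction i using WellFoundedLT.induction with
  | ind i IH =>
    rw [EIter_eq]
    refine (mk_iUnion_le _).trans (cmul ((mk_subtype_le _).trans mk_idx_le) (ciSup_le' fun j => ?_))
    exact mk_gNext_le h𝒴 hcomp h𝒰 (IH j.1 j.2)

end Stmt7Aux
theorem stmt_7 {X : Type u} [TopologicalSpace X]
    (𝒴 : Set (Set X))
    (h𝒴card : #𝒴 ≤ continuum)
    (h𝒴cover : ⋃₀ 𝒴 = Set.univ)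
    (h𝒴ct : ∀ Y ∈ 𝒴, CountablyTight ↥Y)
    (h𝒴big : ∀ Y ∈ 𝒴, ∀ x : X, ∃ A ⊆ Y, #A ≤ continuum ∧ x ∈ closure A)
    (hLin : ∀ D : Set X, #D ≤ continuum → LindelofSpace ↥(closure D))
    (hpsi : ∀ D : Set X, #D ≤ continuum → PseudoCharLE (closure D) continuum) :
    ∃ D : Set X, Dense D ∧ #D ≤ continuum := by
  classical
  open Stmt7Aux in
  rcases isEmpty_or_nonempty X with hX | hX
  · refine ⟨∅, fun x => (IsEmpty.false x).elim, ?_⟩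
    rw [mk_emptyCollection]
    exact zero_le
  -- Choice functions
  have hcomp' : ∀ (x : X) (Y : Set X), ∃ A : Set X, #A ≤ continuum ∧
      (Y ∈ 𝒴 → A ⊆ Y ∧ x ∈ closure A) := by
    intro x Y
    by_cases hY : Y ∈ 𝒴
    · obtain ⟨A, hA1, hA2, hA3⟩ := h𝒴big Y hY x
      exact ⟨A, hA2, fun _ => ⟨hA1, hA3⟩⟩
    · exact ⟨∅, by simp, fun h => absurd h hY⟩
  choose comp hcompcard hcompspec using hcomp'
  have h𝒰' : ∀ C : Set X, ∃ 𝒰 : Set (Set X), (∀ U ∈ 𝒰, IsOpen U) ∧ #𝒰 ≤ continuum ∧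
      (C.Countable → ⋂₀ 𝒰 = closure C) := by
    intro C
    by_cases hC : C.Countable
    · obtain ⟨𝒰, h1, h2, h3⟩ := hpsi C (hC.le_aleph0.trans aleph0_le_continuum)
      exact ⟨𝒰, h1, h2, fun _ => h3⟩
    · exact ⟨∅, by simp, by simp, fun h => absurd h hC⟩
  choose 𝒰f h𝒰open h𝒰card h𝒰eq using h𝒰'
  have hw' : ∀ V : Set (Set X), ∃ p : X, ⋃₀ V ≠ Set.univ → p ∉ ⋃₀ V := by
    intro V
    by_cases hV : ⋃₀ V = Set.univ
    · exact ⟨hX.some, fun h => absurd hV h⟩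
    · obtain ⟨p, hp⟩ := (ne_univ_iff_exists_notMem _).1 hV
      exact ⟨p, fun _ => hp⟩
  choose w hw using hw'
  -- The dense set
  set D : Set X := ⋃ i : Idx.{u}, EIter 𝒴 comp 𝒰f w i with hD
  have hEcard : ∀ i : Idx.{u}, #(EIter 𝒴 comp 𝒰f w i) ≤ continuum :=
    mk_EIter_le h𝒴card hcompcard h𝒰card
  have hDcard : #D ≤ continuum :=
    (mk_iUnion_le _).trans (cmul mk_idx_le (ciSup_le' hEcard))
  -- absorption of countable subsets
  have habsorb : ∀ C : Set X, C ⊆ D → C.Countable → ∃ i, C ⊆ EIter 𝒴 comp 𝒰f w i := by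
    intro C hCD hCc
    have hmem : ∀ c : C, ∃ i, (c : X) ∈ EIter 𝒴 comp 𝒰f w i := fun c => mem_iUnion.1 (hCD c.2)
    choose idx hidx using hmem
    haveI : Countable ↥C := hCc.to_subtype
    obtain ⟨i, hi⟩ := exists_idx_bound (countable_range idx)
    refine ⟨i, fun c hc => ?_⟩
    exact EIter_mono (hi _ (mem_range_self ⟨c, hc⟩)) (hidx ⟨c, hc⟩)
  -- D is closed under the companion operation
  have hDcomp : ∀ a ∈ D, ∀ Y ∈ 𝒴, comp a Y ⊆ D := by
    intro a ha Y hY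
    obtain ⟨i, hi⟩ := mem_iUnion.1 ha
    obtain ⟨i', hi'⟩ := exists_idx_bound (countable_singleton i)
    have h1 : comp a Y ⊆ gNext 𝒴 comp 𝒰f w (EIter 𝒴 comp 𝒰f w i) := comp_subset_gNext hi hY
    exact (h1.trans (gNext_subset_EIter (hi' i rfl))).trans (subset_iUnion _ i')
  -- D is closed under the witness operation
  have hDw : ∀ V : Set (Set X), V.Countable → V ⊆ pool 𝒰f D → ⋃₀ V ≠ Set.univ → w V ∈ D := by
    intro V hVc hVp hVne
    have hmem : ∀ U : V, ∃ C : Set X, C ⊆ D ∧ C.Countable ∧ (U : Set X) ∈ 𝒰f C := by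
      intro U
      obtain ⟨⟨C, hCD, hCc⟩, hU⟩ := mem_iUnion.1 (hVp U.2)
      exact ⟨C, hCD, hCc, hU⟩
    choose Cf hC1 hC2 hC3 using hmem
    haveI : Countable ↥V := hVc.to_subtype
    obtain ⟨i, hi⟩ := habsorb (⋃ U : V, Cf U) (iUnion_subset hC1) (countable_iUnion hC2)
    have hpool : V ⊆ pool 𝒰f (EIter 𝒴 comp 𝒰f w i) := by
      intro U hU
      refine mem_pool ((subset_iUnion (fun U : V => Cf U) ⟨U, hU⟩).trans hi) (hC2 ⟨U, hU⟩)
        (hC3 ⟨U, hU⟩)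
    obtain ⟨i', hi'⟩ := exists_idx_bound (countable_singleton i)
    have h1 : w V ∈ gNext 𝒴 comp 𝒰f w (EIter 𝒴 comp 𝒰f w i) := w_mem_gNext hVc hpool hVne
    exact (gNext_subset_EIter (hi' i rfl)).trans (subset_iUnion _ i') h1
  -- countable tightness transfer
  have htight : ∀ Y ∈ 𝒴, ∀ B ⊆ Y, ∀ x ∈ Y, x ∈ closure B →
      ∃ C, C ⊆ B ∧ C.Countable ∧ x ∈ closure C := by
    intro Y hY B hBY x hxY hxB
    have hct := h𝒴ct Y hY
    have hx' : (⟨x, hxY⟩ : Y) ∈ closure (Subtype.val ⁻¹' B : Set Y) := by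
      rw [closure_subtype]
      have himg : (Subtype.val '' (Subtype.val ⁻¹' B : Set Y) : Set X) = B := by
        rw [Subtype.image_preimage_coe]
        exact inter_eq_right.2 hBY
      rw [himg]
      exact hxB
    obtain ⟨B', hB'sub, hB'c, hxB'⟩ := hct _ _ hx'
    refine ⟨Subtype.val '' B', ?_, hB'c.image _, ?_⟩
    · rintro z ⟨z', hz', rfl⟩
      exact hB'sub hz'
    · rw [closure_subtype] at hxB'
      exact hxB'
  -- Main claim: D is dense
  refine ⟨D, ?_, hDcard⟩
  by_contra hnd
  obtain ⟨y, hy⟩ : ∃ y : X, y ∉ closure D := by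
    by_contra h
    push_neg at h
    exact hnd h
  have hLinF : IsLindelof (closure D) := isLindelof_iff_LindelofSpace.2 (hLin D hDcard)
  have hcover : ∀ x : closure D, ∃ U : Set X, IsOpen U ∧ (x : X) ∈ U ∧ y ∉ U ∧
      U ∈ pool 𝒰f D := by
    rintro ⟨x, hxF⟩
    obtain ⟨Y'', hY'', hxY''⟩ : x ∈ ⋃₀ 𝒴 := h𝒴cover ▸ mem_univ x
    set B : Set X := ⋃ a : D, comp a.1 Y'' with hB
    have hBY : B ⊆ Y'' := iUnion_subset fun a => (hcompspec a.1 Y'' hY'').1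
    have hBD : B ⊆ D := iUnion_subset fun a => hDcomp a.1 a.2 Y'' hY''
    have hDclB : D ⊆ closure B := by
      intro a ha
      exact closure_mono (subset_iUnion (fun a : D => comp a.1 Y'') ⟨a, ha⟩)
        ((hcompspec a Y'' hY'').2)
    have hxclB : x ∈ closure B := closure_minimal hDclB isClosed_closure hxF
    obtain ⟨C, hCB, hCc, hxC⟩ := htight Y'' hY'' B hBY x hxY'' hxclB
    have hCD : C ⊆ D := hCB.trans hBD
    have hyC : y ∉ closure C := fun h => hy (closure_mono hCD h)
    have hinter : ⋂₀ 𝒰f C = closure C := h𝒰eq C hCc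
    obtain ⟨U, hU𝒰, hyU⟩ : ∃ U ∈ 𝒰f C, y ∉ U := by
      by_contra h
      push_neg at h
      exact hyC (hinter ▸ (fun V hV => h V hV : y ∈ ⋂₀ 𝒰f C))
    refine ⟨U, h𝒰open C U hU𝒰, ?_, hyU, mem_pool hCD hCc hU𝒰⟩
    have : x ∈ ⋂₀ 𝒰f C := hinter ▸ hxC
    exact this U hU𝒰
  choose Ux hUo hUmem hUy hUp using hcover
  have hFsub : closure D ⊆ ⋃ x : closure D, Ux x := fun z hz =>
    mem_iUnion.2 ⟨⟨z, hz⟩, hUmem ⟨z, hz⟩⟩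
  obtain ⟨t, htc, htcov⟩ := hLinF.elim_countable_subcover Ux hUo hFsub
  set V : Set (Set X) := Ux '' t with hV
  have hVc : V.Countable := htc.image _
  have hVp : V ⊆ pool 𝒰f D := by
    rintro _ ⟨x, _, rfl⟩
    exact hUp x
  have hyV : y ∉ ⋃₀ V := by
    rintro ⟨_, ⟨x, _, rfl⟩, hyU⟩
    exact hUy x hyU
  have hVne : ⋃₀ V ≠ Set.univ := fun h => hyV (h ▸ mem_univ y)
  have hwV : w V ∈ D := hDw V hVc hVp hVne
  have hwVF : w V ∈ closure D := subset_closure hwV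
  have hwVU : w V ∈ ⋃₀ V := by
    obtain ⟨x, hxt, hmem⟩ := mem_iUnion₂.1 (htcov hwVF)
    exact ⟨Ux x, mem_image_of_mem _ hxt, hmem⟩
  exact hw V hVne hwVU
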